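/- Let G be a connected finite simple graph on n ≥ 4 vertices that is not complete, and let X be a minimum vertex cut of G (so |X| = κ(G)). Then there exists a collection F of pairwise vertex-disjoint copies of K_{1,2} in G such that every vertex of X lies in some member of F and |F| ≤ |X|. -/

import Mathlib

/-- A copy of `K_{1,2}` in `G`: three distinct vertices `a, b, c` with `b`
adjacent to both `a` and `c`. -/
def SimpleGraph.IsK12Copy {V : Type*} [DecidableEq V] (G : SimpleGraph V)
    (s : Finset V) : Prop :=
  ∃ a b c : V, a ≠ b ∧ a ≠ c ∧ b ≠ c ∧ s = {a, b, c} ∧ G.Adj b a ∧ G.Adj b c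

/-- A `K_{1,2}`-structure-cut of `G`: a nonempty collection of pairwise
vertex-disjoint copies of `K_{1,2}` whose removal leaves a graph that is
disconnected or has exactly one vertex. -/
def SimpleGraph.IsK12StructureCut {V : Type*} [DecidableEq V] (G : SimpleGraph V)
    (F : Finset (Finset V)) : Prop :=
  F.Nonempty ∧ (∀ s ∈ F, G.IsK12Copy s) ∧
    (F : Set (Finset V)).Pairwise Disjoint ∧
    (¬ (G.induce {v : V | ∀ s ∈ F, v ∉ s}).Preconnected ∨
      {v : V | ∀ s ∈ F, v ∉ s}.ncard = 1)

open SimpleGraph Finset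

section Helpers

variable {V : Type*}


lemma walk_stay (G : SimpleGraph V) (S A B : Set V)
    (hS : S = A ∪ B) (hne : ∀ a ∈ A, ∀ b ∈ B, ¬ G.Adj a b) :
    ∀ (u v : S), (G.induce S).Walk u v → (u : V) ∈ A → (v : V) ∈ A := by
  intro u v w
  induction w with
  | nil => exact fun h => h
  | cons h p ih =>
    intro hu
    rename_i x y _
    apply ih
    have hadj : G.Adj (x : V) (y : V) := by simpa using h
    have hyS : (y : V) ∈ S := y.2
    rcases (hS ▸ hyS : (y:V) ∈ A ∪ B) with h1 | h2
    · exact h1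
    · exact absurd hadj (hne _ hu _ h2)

lemma split_not_preconnected (G : SimpleGraph V) (S A B : Set V)
    (hS : S = A ∪ B) (hd : Disjoint A B) (ha : A.Nonempty) (hb : B.Nonempty)
    (hne : ∀ a ∈ A, ∀ b ∈ B, ¬ G.Adj a b) :
    ¬ (G.induce S).Preconnected := by
  intro h
  obtain ⟨a, haA⟩ := ha
  obtain ⟨b, hbB⟩ := hb
  have haS : a ∈ S := by rw [hS]; exact Or.inl haA
  have hbS : b ∈ S := by rw [hS]; exact Or.inr hbB
  obtain ⟨w⟩ := h ⟨a, haS⟩ ⟨b, hbS⟩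
  have := walk_stay G S A B hS hne _ _ w haA
  exact hd.ne_of_mem this hbB rfl

lemma not_preconnected_split (G : SimpleGraph V) (S : Set V)
    (h : ¬ (G.induce S).Preconnected) :
    ∃ A B : Set V, S = A ∪ B ∧ Disjoint A B ∧ A.Nonempty ∧ B.Nonempty ∧
      (∀ a ∈ A, a ∈ S) ∧ (∀ b ∈ B, b ∈ S) ∧
      ∀ a ∈ A, ∀ b ∈ B, ¬ G.Adj a b := by
  simp only [Preconnected, not_forall] at h
  obtain ⟨u, v, huv⟩ := h
  refine ⟨{w | ∃ hw : w ∈ S, (G.induce S).Reachable u ⟨w, hw⟩},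
          {w | w ∈ S ∧ ¬ ∃ hw : w ∈ S, (G.induce S).Reachable u ⟨w, hw⟩}, ?_, ?_, ?_, ?_, ?_, ?_, ?_⟩
  · ext w
    constructor
    · intro hw
      by_cases hr : ∃ hw' : w ∈ S, (G.induce S).Reachable u ⟨w, hw'⟩
      · exact Or.inl hr
      · exact Or.inr ⟨hw, hr⟩
    · rintro (⟨hw, _⟩ | ⟨hw, _⟩) <;> exact hw
  · rw [Set.disjoint_left]
    rintro w ⟨hw, hr⟩ ⟨_, hnr⟩
    exact hnr ⟨hw, hr⟩
  · exact ⟨u, u.2, Reachable.refl _⟩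
  · refine ⟨v, v.2, ?_⟩
    rintro ⟨hv, hr⟩
    exact huv (by convert hr)
  · rintro a ⟨ha, _⟩; exact ha
  · rintro b ⟨hb, _⟩; exact hb
  · rintro a ⟨ha, hra⟩ b ⟨hb, hnrb⟩ hadj
    exact hnrb ⟨hb, hra.trans (Adj.reachable (by simpa using hadj))⟩


section Abstract

variable [DecidableEq V] (G : SimpleGraph V) [DecidableRel G.Adj]


variable {V : Type*} [DecidableEq V] (G : SimpleGraph V) [DecidableRel G.Adj]

lemma extend_cover (X W X' W' : Finset V) (F' : Finset (Finset V)) (s₀ : Finset V)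
    (hIs : ∀ s ∈ F', G.IsK12Copy s) (hsub' : ∀ s ∈ F', ↑s ⊆ (↑X' ∪ ↑W' : Set V))
    (hpd : (F' : Set (Finset V)).Pairwise Disjoint)
    (hcov' : ∀ x ∈ X', ∃ s ∈ F', x ∈ s) (hcard' : F'.card ≤ X'.card)
    (hs₀ : G.IsK12Copy s₀) (hs₀sub : ↑s₀ ⊆ (↑X ∪ ↑W : Set V))
    (hXX : X' ⊆ X) (hWW : W' ⊆ W)
    (hs₀dj : ∀ v ∈ s₀, v ∉ X' ∧ v ∉ W')
    (hcov₀ : ∀ x ∈ X, x ∉ X' → x ∈ s₀)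
    (hcard : X'.card + 1 ≤ X.card) :
    ∃ F : Finset (Finset V), (∀ s ∈ F, G.IsK12Copy s) ∧ (∀ s ∈ F, ↑s ⊆ (↑X ∪ ↑W : Set V)) ∧
      (F : Set (Finset V)).Pairwise Disjoint ∧ (∀ x ∈ X, ∃ s ∈ F, x ∈ s) ∧ F.card ≤ X.card := by
  refine ⟨insert s₀ F', ?_, ?_, ?_, ?_, ?_⟩
  · intro s hs
    rcases Finset.mem_insert.1 hs with rfl | hs
    · exact hs₀
    · exact hIs s hs
  · intro s hs
    rcases Finset.mem_insert.1 hs with rfl | hs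
    · exact hs₀sub
    · exact (hsub' s hs).trans (Set.union_subset_union (by exact_mod_cast hXX) (by exact_mod_cast hWW))
  · have hdj : ∀ t ∈ F', Disjoint s₀ t := by
      intro t ht
      rw [Finset.disjoint_left]
      intro v hv hvt
      have := hsub' t ht hvt
      rcases this with h | h
      · exact (hs₀dj v hv).1 (by exact_mod_cast h)
      · exact (hs₀dj v hv).2 (by exact_mod_cast h)
    rw [Finset.coe_insert]
    apply Set.Pairwise.insert hpd
    intro t ht hne
    exact ⟨hdj t ht, (hdj t ht).symm⟩
  · intro x hx
    by_cases hx' : x ∈ X'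
    · obtain ⟨s, hs, hxs⟩ := hcov' x hx'
      exact ⟨s, Finset.mem_insert_of_mem hs, hxs⟩
    · exact ⟨s₀, Finset.mem_insert_self _ _, hcov₀ x hx hx'⟩
  · calc (insert s₀ F').card ≤ F'.card + 1 := Finset.card_insert_le _ _
      _ ≤ X'.card + 1 := by omega
      _ ≤ X.card := hcard

lemma abs_cover : ∀ (k : ℕ) (X W : Finset V), X.card = k → Disjoint X W →
    (∀ x ∈ X, 2 ≤ (W.filter (fun w => G.Adj x w)).card) →
    (∀ x ∈ X, X.card ≤ (W.filter (fun w => G.Adj x w)).card + (X.filter (fun y => G.Adj x y)).card) →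
    ∃ F : Finset (Finset V), (∀ s ∈ F, G.IsK12Copy s) ∧ (∀ s ∈ F, ↑s ⊆ (↑X ∪ ↑W : Set V)) ∧
      (F : Set (Finset V)).Pairwise Disjoint ∧ (∀ x ∈ X, ∃ s ∈ F, x ∈ s) ∧ F.card ≤ X.card := by
  intro k
  induction k using Nat.strong_induction_on with
  | _ k IH =>
  intro X W hk hdisj h2 h3
  rcases Finset.eq_empty_or_nonempty X with rfl | hXne
  · exact ⟨∅, by simp, by simp, by simp, by simp, by simp⟩
  by_cases hT : ∃ a ∈ X, ∃ b ∈ X, ∃ c ∈ X, a ≠ b ∧ a ≠ c ∧ b ≠ c ∧ G.Adj b a ∧ G.Adj b c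
  · -- strip an X-triple
    obtain ⟨a, ha, b, hb, c, hc, hab, hac, hbc, hba, hbc'⟩ := hT
    set T : Finset V := {a, b, c} with hTdef
    have hTsub : T ⊆ X := by
      intro v hv
      simp only [hTdef, Finset.mem_insert, Finset.mem_singleton] at hv
      rcases hv with rfl | rfl | rfl <;> assumption
    have hTcard : T.card = 3 := by
      rw [hTdef]
      rw [Finset.card_insert_of_notMem (by simp [hab, hac]), Finset.card_insert_of_notMem (by simp [hbc])]
      simp
    have hk3 : 3 ≤ k := by
      calc 3 = T.card := hTcard.symm
        _ ≤ X.card := Finset.card_le_card hTsub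
        _ = k := hk
    set X' := X \ T with hX'def
    have hX'card : X'.card = k - 3 := by
      rw [hX'def, Finset.card_sdiff_of_subset hTsub, hTcard, hk]
    obtain ⟨F', hIs, hsub', hpd, hcov', hcard'⟩ :=
      IH (k - 3) (by omega) X' W hX'card (hdisj.mono_left (Finset.sdiff_subset)) 
        (fun x hx => h2 x (Finset.sdiff_subset hx))
        (by
          intro x hx
          have hxX : x ∈ X := Finset.sdiff_subset hx
          have hmain := h3 x hxX
          have hfil : (X.filter (fun y => G.Adj x y)).card ≤ (X'.filter (fun y => G.Adj x y)).card + 3 := by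
            have hsb : X.filter (fun y => G.Adj x y) ⊆ (X'.filter (fun y => G.Adj x y)) ∪ T := by
              intro v hv
              simp only [Finset.mem_filter] at hv
              by_cases hvT : v ∈ T
              · exact Finset.mem_union_right _ hvT
              · exact Finset.mem_union_left _ (Finset.mem_filter.2 ⟨Finset.mem_sdiff.2 ⟨hv.1, hvT⟩, hv.2⟩)
            calc (X.filter (fun y => G.Adj x y)).card ≤ _ := Finset.card_le_card hsb
              _ ≤ (X'.filter (fun y => G.Adj x y)).card + T.card := Finset.card_union_le _ _
              _ = _ := by rw [hTcard]
          rw [hX'card]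
          omega)
    refine extend_cover G X W X' W F' T hIs hsub' hpd hcov' hcard'
      ⟨a, b, c, hab, hac, hbc, rfl, hba, hbc'⟩ ?_ Finset.sdiff_subset (le_refl W) ?_ ?_ ?_
    · intro v hv
      exact Set.mem_union_left _ (by exact_mod_cast hTsub (by exact_mod_cast hv))
    · intro v hv
      refine ⟨by simp [hX'def, hv], ?_⟩
      exact fun hvW => Finset.disjoint_left.1 hdisj (hTsub hv) hvW
    · intro x hx hx'
      rw [hX'def, Finset.mem_sdiff] at hx'
      push_neg at hx'
      exact hx' hx
    · omega
  · -- no triple: internal degree ≤ 1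
    have hInt : ∀ x ∈ X, (X.filter (fun y => G.Adj x y)).card ≤ 1 := by
      intro x hx
      by_contra h
      push_neg at h
      obtain ⟨y, hy, z, hz, hyz⟩ := Finset.one_lt_card.1 h
      simp only [Finset.mem_filter] at hy hz
      exact hT ⟨y, hy.1, x, hx, z, hz.1, (G.ne_of_adj hy.2).symm, hyz, G.ne_of_adj hz.2, hy.2, hz.2⟩
    have hdW : ∀ x ∈ X, k - 1 ≤ (W.filter (fun w => G.Adj x w)).card := by
      intro x hx
      have := h3 x hx
      have := hInt x hx
      omega
    by_cases hGP : ∃ u ∈ W, ∃ x ∈ X, ∃ y ∈ X, x ≠ y ∧ G.Adj x u ∧ G.Adj y u ∧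
        ∀ z ∈ X \ ({x, y} : Finset V), 2 ≤ ((W.erase u).filter (fun w => G.Adj z w)).card
    · -- peel a pair {x, u, y}
      obtain ⟨u, hu, x, hx, y, hy, hxy, hxu, hyu, hgood⟩ := hGP
      set P : Finset V := {x, y} with hPdef
      have hPsub : P ⊆ X := by
        intro v hv
        simp only [hPdef, Finset.mem_insert, Finset.mem_singleton] at hv
        rcases hv with rfl | rfl <;> assumption
      have hPcard : P.card = 2 := by
        rw [hPdef, Finset.card_insert_of_notMem (by simp [hxy]), Finset.card_singleton]
      have hk2 : 2 ≤ k := by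
        calc 2 = P.card := hPcard.symm
          _ ≤ X.card := Finset.card_le_card hPsub
          _ = k := hk
      set X' := X \ P with hX'def
      set W' := W.erase u with hW'def
      have hX'card : X'.card = k - 2 := by
        rw [hX'def, Finset.card_sdiff_of_subset hPsub, hPcard, hk]
      have hWW' : ∀ z, (W.filter (fun w => G.Adj z w)).card ≤ (W'.filter (fun w => G.Adj z w)).card + 1 := by
        intro z
        have hsb : W.filter (fun w => G.Adj z w) ⊆ insert u (W'.filter (fun w => G.Adj z w)) := by
          intro v hv
          simp only [Finset.mem_filter] at hv
          by_cases hvu : v = u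
          · exact Finset.mem_insert.2 (Or.inl hvu)
          · exact Finset.mem_insert.2 (Or.inr (Finset.mem_filter.2
              ⟨Finset.mem_erase.2 ⟨hvu, hv.1⟩, hv.2⟩))
        calc _ ≤ _ := Finset.card_le_card hsb
          _ ≤ _ := Finset.card_insert_le _ _
      obtain ⟨F', hIs, hsub', hpd, hcov', hcard'⟩ :=
        IH (k - 2) (by omega) X' W' hX'card
          ((hdisj.mono_left Finset.sdiff_subset).mono_right (Finset.erase_subset _ _))
          (fun z hz => hgood z hz)
          (by
            intro z hz
            have hzX : z ∈ X := Finset.sdiff_subset hz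
            have h3z := h3 z hzX
            have hIz := hInt z hzX
            have hW := hWW' z
            have hXfil : (X'.filter (fun y => G.Adj z y)).card + 1 ≥ (X.filter (fun y => G.Adj z y)).card := by
              omega
            rw [hX'card]
            omega)
      have hxu' : x ≠ u := by rintro rfl; exact Finset.disjoint_left.1 hdisj hx hu
      have huy' : u ≠ y := by
        intro h
        exact Finset.disjoint_left.1 hdisj (h ▸ hy) hu
      refine extend_cover G X W X' W' F' {x, u, y} hIs hsub' hpd hcov' hcard'
        ⟨x, u, y, hxu', hxy, huy', rfl, hxu.symm, hyu.symm⟩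
        ?_ Finset.sdiff_subset (Finset.erase_subset _ _) ?_ ?_ ?_
      · intro v hv
        simp only [Finset.coe_insert, Set.mem_insert_iff, Finset.coe_singleton,
          Set.mem_singleton_iff] at hv
        rcases hv with rfl | rfl | rfl
        · exact Set.mem_union_left _ (by exact_mod_cast hx)
        · exact Set.mem_union_right _ (by exact_mod_cast hu)
        · exact Set.mem_union_left _ (by exact_mod_cast hy)
      · intro v hv
        simp only [Finset.mem_insert, Finset.mem_singleton] at hv
        rcases hv with rfl | rfl | rfl
        · exact ⟨by simp [hX'def, hPdef], fun hvW => Finset.disjoint_left.1 hdisj hx (Finset.mem_of_mem_erase hvW)⟩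
        · constructor
          · intro hvX'
            exact Finset.disjoint_left.1 hdisj (Finset.sdiff_subset hvX') hu
          · simp [hW'def]
        · exact ⟨by simp [hX'def, hPdef], fun hvW => Finset.disjoint_left.1 hdisj hy (Finset.mem_of_mem_erase hvW)⟩
      · intro z hz hz'
        rw [hX'def, Finset.mem_sdiff] at hz'
        push_neg at hz'
        have := hz' hz
        simp only [hPdef, Finset.mem_insert, Finset.mem_singleton] at this
        rcases this with rfl | rfl
        · simp
        · simp
      · omega
    · -- no good pair: first derive that no two X-vertices share a W-neighbour
      have hNS : ∀ u ∈ W, ∀ x ∈ X, ∀ y ∈ X, x ≠ y → ¬ (G.Adj x u ∧ G.Adj y u) := by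
        rintro u hu x hx y hy hxy ⟨hxu, hyu⟩
        apply hGP
        have herase : ∀ z, (W.erase u).filter (fun w => G.Adj z w) =
            (W.filter (fun w => G.Adj z w)).erase u := by
          intro z; exact Finset.filter_erase _ _ _
        have hk2 : 2 ≤ k := by
          have : ({x, y} : Finset V) ⊆ X := by
            intro v hv
            simp only [Finset.mem_insert, Finset.mem_singleton] at hv
            rcases hv with rfl | rfl <;> assumption
          calc 2 = ({x, y} : Finset V).card := by
                rw [Finset.card_insert_of_notMem (by simp [hxy]), Finset.card_singleton]
            _ ≤ X.card := Finset.card_le_card this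
            _ = k := hk
        rcases Nat.lt_or_ge k 3 with hklt | hk3
        · -- k = 2 : condition on third vertices is vacuous
          refine ⟨u, hu, x, hx, y, hy, hxy, hxu, hyu, ?_⟩
          intro z hz
          exfalso
          rw [Finset.mem_sdiff] at hz
          have hsubxy : ({x, y} : Finset V) ⊆ X := by
            intro v hv
            simp only [Finset.mem_insert, Finset.mem_singleton] at hv
            rcases hv with rfl | rfl <;> assumption
          have hcxy : ({x, y} : Finset V).card = 2 := by
            rw [Finset.card_insert_of_notMem (by simp [hxy]), Finset.card_singleton]
          have hXxy : X = {x, y} := by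
            refine (Finset.eq_of_subset_of_card_le hsubxy ?_).symm
            rw [hcxy, hk]; omega
          rw [hXxy] at hz
          exact hz.2 hz.1
        rcases Nat.lt_or_ge 3 k with hkgt | hkeq
        · -- k ≥ 4 : every third vertex has many free neighbours
          refine ⟨u, hu, x, hx, y, hy, hxy, hxu, hyu, ?_⟩
          intro z hz
          have hzX : z ∈ X := (Finset.mem_sdiff.1 hz).1
          have := hdW z hzX
          rw [herase]
          have := Finset.pred_card_le_card_erase (s := W.filter (fun w => G.Adj z w)) (a := u)
          omega
        · -- k = 3 : detailed case analysis
          have hk3' : k = 3 := by omega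
          -- a vertex with no internal neighbour exists
          obtain ⟨p, q, r, hpq, hpr, hqr, hXpqr⟩ := Finset.card_eq_three.1 (by rw [hk]; exact hk3')
          have hpX : p ∈ X := by rw [hXpqr]; simp
          have hqX : q ∈ X := by rw [hXpqr]; simp
          have hrX : r ∈ X := by rw [hXpqr]; simp
          have hz₀ : ∃ z₀ ∈ X, (X.filter (fun y => G.Adj z₀ y)).card = 0 := by
            by_contra hcon
            push_neg at hcon
            have hnb : ∀ z ∈ X, ∃ v ∈ X, G.Adj z v := by
              intro z hz
              have := hcon z hz
              obtain ⟨v, hv⟩ := Finset.card_pos.1 (Nat.pos_of_ne_zero this)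
              exact ⟨v, (Finset.mem_filter.1 hv).1, (Finset.mem_filter.1 hv).2⟩
            have htwo : ∀ z ∈ X, ∀ v ∈ X, ∀ w ∈ X, v ≠ w → G.Adj z v → G.Adj z w → False := by
              intro z hz v hv w hw hvw hzv hzw
              have : 2 ≤ (X.filter (fun y => G.Adj z y)).card := by
                apply Finset.one_lt_card.2
                exact ⟨v, Finset.mem_filter.2 ⟨hv, hzv⟩, w, Finset.mem_filter.2 ⟨hw, hzw⟩, hvw⟩
              have := hInt z hz
              omega
            obtain ⟨np, hnpX, hpnp⟩ := hnb p hpX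
            obtain ⟨nr, hnrX, hrnr⟩ := hnb r hrX
            obtain ⟨nq, hnqX, hqnq⟩ := hnb q hqX
            have hnpne : np ≠ p := fun h => G.loopless.irrefl p (h ▸ hpnp)
            have hnrne : nr ≠ r := fun h => G.loopless.irrefl r (h ▸ hrnr)
            have hnqne : nq ≠ q := fun h => G.loopless.irrefl q (h ▸ hqnq)
            rw [hXpqr] at hnpX hnrX hnqX
            simp only [Finset.mem_insert, Finset.mem_singleton] at hnpX hnrX hnqX
            rcases hnpX with h | h | h
            · exact hnpne h
            · -- p ~ q
              have hpq' : G.Adj p q := h ▸ hpnp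
              rcases hnrX with h' | h' | h'
              · -- r ~ p : p has two internal neighbours q, r
                have hpr' : G.Adj p r := (h' ▸ hrnr).symm
                exact htwo p hpX q hqX r hrX hqr hpq' hpr'
              · -- r ~ q : q has two internal neighbours p, r
                have hqr' : G.Adj q r := (h' ▸ hrnr).symm
                exact htwo q hqX p hpX r hrX hpr hpq'.symm hqr'
              · exact hnrne h'
            · -- p ~ r
              have hpr' : G.Adj p r := h ▸ hpnp
              rcases hnqX with h' | h' | h'
              · -- q ~ p : p has two internal neighbours q, r
                have hpq' : G.Adj p q := (h' ▸ hqnq).symm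
                exact htwo p hpX q hqX r hrX hqr hpq' hpr'
              · exact hnqne h'
              · -- q ~ r : r has two internal neighbours p, q
                have hrq' : G.Adj r q := (h' ▸ hqnq).symm
                exact htwo r hrX p hpX q hqX hpq hpr'.symm hrq'
          obtain ⟨z₀, hz₀X, hz₀int⟩ := hz₀
          have hz₀W : 3 ≤ (W.filter (fun w => G.Adj z₀ w)).card := by
            have := h3 z₀ hz₀X
            rw [hk] at this
            omega
          by_cases hzxy : z₀ = x ∨ z₀ = y
          · -- the pair to peel is (other one of x,y) together with z₀
            obtain ⟨pp, hppX, hppu, hppz⟩ : ∃ pp, pp ∈ X ∧ G.Adj pp u ∧ pp ≠ z₀ := by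
              rcases hzxy with rfl | rfl
              · exact ⟨y, hy, hyu, fun h => hxy h.symm⟩
              · exact ⟨x, hx, hxu, hxy⟩
            -- the third vertex t
            have hcard2 : (X \ ({pp, z₀} : Finset V)).card = 1 := by
              rw [Finset.card_sdiff_of_subset]
              · rw [hk, hk3']
                rw [Finset.card_insert_of_notMem (by simp [hppz]), Finset.card_singleton]
              · intro v hv
                simp only [Finset.mem_insert, Finset.mem_singleton] at hv
                rcases hv with rfl | rfl
                · exact hppX
                · exact hz₀X
            obtain ⟨t, ht⟩ := Finset.card_eq_one.1 hcard2
            have htX : t ∈ X := by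
              have : t ∈ X \ ({pp, z₀} : Finset V) := by rw [ht]; simp
              exact (Finset.mem_sdiff.1 this).1
            have htne : t ≠ pp ∧ t ≠ z₀ := by
              have : t ∈ X \ ({pp, z₀} : Finset V) := by rw [ht]; simp
              have := (Finset.mem_sdiff.1 this).2
              simp only [Finset.mem_insert, Finset.mem_singleton] at this
              push_neg at this
              exact this
            by_cases htgood : 2 ≤ ((W.erase u).filter (fun w => G.Adj t w)).card
            · refine ⟨u, hu, pp, hppX, z₀, hz₀X, hppz, hppu, ?_, ?_⟩
              · rcases hzxy with rfl | rfl
                · exact hxu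
                · exact hyu
              · intro z hz
                have : z = t := by
                  have : z ∈ ({t} : Finset V) := by rw [← ht]; exact hz
                  simpa using this
                subst this
                exact htgood
            · -- t is adjacent to u as well; use pair (pp, t) with third z₀
              push_neg at htgood
              have htu : G.Adj t u := by
                by_contra htu
                have : (W.erase u).filter (fun w => G.Adj t w) = W.filter (fun w => G.Adj t w) := by
                  rw [herase]
                  apply Finset.erase_eq_of_notMem
                  simp only [Finset.mem_filter]
                  rintro ⟨-, h⟩
                  exact htu h
                rw [this] at htgood
                have := h2 t htX
                omega
              refine ⟨u, hu, pp, hppX, t, htX, (htne.1).symm, hppu, htu, ?_⟩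
              intro z hz
              have hzz : z = z₀ := by
                have h1 : z ∈ X := (Finset.mem_sdiff.1 hz).1
                have h2' := (Finset.mem_sdiff.1 hz).2
                simp only [Finset.mem_insert, Finset.mem_singleton] at h2'
                push_neg at h2'
                -- X has 3 elements pp, t, z₀
                have hsub : ({pp, t, z₀} : Finset V) ⊆ X := by
                  intro v hv
                  simp only [Finset.mem_insert, Finset.mem_singleton] at hv
                  rcases hv with rfl | rfl | rfl
                  · exact hppX
                  · exact htX
                  · exact hz₀X
                have hc3 : ({pp, t, z₀} : Finset V).card = 3 := by
                  rw [Finset.card_insert_of_notMem, Finset.card_insert_of_notMem, Finset.card_singleton]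
                  · simp [htne.2]
                  · simp only [Finset.mem_insert, Finset.mem_singleton]
                    push_neg
                    exact ⟨fun h => htne.1 h.symm, hppz⟩
                have hXeq : X = ({pp, t, z₀} : Finset V) :=
                  (Finset.eq_of_subset_of_card_le hsub (by rw [hc3, hk, hk3'])).symm
                rw [hXeq] at h1
                simp only [Finset.mem_insert, Finset.mem_singleton] at h1
                rcases h1 with rfl | rfl | rfl
                · exact absurd rfl h2'.1
                · exact absurd rfl h2'.2
                · rfl
              subst hzz
              rw [herase]
              have := Finset.pred_card_le_card_erase (s := W.filter (fun w => G.Adj z w)) (a := u)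
              omega
          · -- z₀ is the third vertex of the pair (x, y)
            push_neg at hzxy
            refine ⟨u, hu, x, hx, y, hy, hxy, hxu, hyu, ?_⟩
            intro z hz
            have hzz : z = z₀ := by
              have h1 : z ∈ X := (Finset.mem_sdiff.1 hz).1
              have h2' := (Finset.mem_sdiff.1 hz).2
              simp only [Finset.mem_insert, Finset.mem_singleton] at h2'
              push_neg at h2'
              have hsub : ({x, y, z₀} : Finset V) ⊆ X := by
                intro v hv
                simp only [Finset.mem_insert, Finset.mem_singleton] at hv
                rcases hv with rfl | rfl | rfl
                · exact hx
                · exact hy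
                · exact hz₀X
              have hc3 : ({x, y, z₀} : Finset V).card = 3 := by
                rw [Finset.card_insert_of_notMem, Finset.card_insert_of_notMem, Finset.card_singleton]
                · simp [Ne.symm hzxy.2]
                · simp only [Finset.mem_insert, Finset.mem_singleton]
                  push_neg
                  exact ⟨hxy, Ne.symm hzxy.1⟩
              have hXeq : X = ({x, y, z₀} : Finset V) :=
                (Finset.eq_of_subset_of_card_le hsub (by rw [hc3, hk, hk3'])).symm
              rw [hXeq] at h1
              simp only [Finset.mem_insert, Finset.mem_singleton] at h1
              rcases h1 with rfl | rfl | rfl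
              · exact absurd rfl h2'.1
              · exact absurd rfl h2'.2
              · rfl
            subst hzz
            rw [herase]
            have := Finset.pred_card_le_card_erase (s := W.filter (fun w => G.Adj z w)) (a := u)
            omega
      -- singles peel
      obtain ⟨x₀, hx₀⟩ := hXne
      obtain ⟨a, haf, b, hbf, hab⟩ := Finset.one_lt_card.1 (h2 x₀ hx₀)
      have haW : a ∈ W := (Finset.mem_filter.1 haf).1
      have hbW : b ∈ W := (Finset.mem_filter.1 hbf).1
      have hax : G.Adj x₀ a := (Finset.mem_filter.1 haf).2
      have hbx : G.Adj x₀ b := (Finset.mem_filter.1 hbf).2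
      set X' := X.erase x₀ with hX'def
      set W' := (W.erase a).erase b with hW'def
      have hX'card : X'.card = k - 1 := by rw [hX'def, Finset.card_erase_of_mem hx₀, hk]
      have hWsub : ∀ z ∈ X', W.filter (fun w => G.Adj z w) ⊆ W'.filter (fun w => G.Adj z w) := by
        intro z hz w hw
        have hzX : z ∈ X := Finset.mem_of_mem_erase hz
        have hzx₀ : z ≠ x₀ := Finset.ne_of_mem_erase hz
        obtain ⟨hwW, hwz⟩ := Finset.mem_filter.1 hw
        have hwa : w ≠ a := by
          rintro rfl
          exact hNS w hwW z hzX x₀ hx₀ hzx₀ ⟨hwz, hax⟩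
        have hwb : w ≠ b := by
          rintro rfl
          exact hNS w hwW z hzX x₀ hx₀ hzx₀ ⟨hwz, hbx⟩
        exact Finset.mem_filter.2 ⟨Finset.mem_erase.2 ⟨hwb, Finset.mem_erase.2 ⟨hwa, hwW⟩⟩, hwz⟩
      obtain ⟨F', hIs, hsub', hpd, hcov', hcard'⟩ :=
        IH (k - 1) (by have := Finset.card_pos.2 ⟨x₀, hx₀⟩; omega) X' W' hX'card
          ((hdisj.mono_left (Finset.erase_subset _ _)).mono_right
            ((Finset.erase_subset _ _).trans (Finset.erase_subset _ _)))
          (fun z hz => le_trans (h2 z (Finset.mem_of_mem_erase hz)) (Finset.card_le_card (hWsub z hz)))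
          (by
            intro z hz
            have hzX : z ∈ X := Finset.mem_of_mem_erase hz
            have h3z := h3 z hzX
            have hW := Finset.card_le_card (hWsub z hz)
            have hXfil : (X.filter (fun y => G.Adj z y)).card ≤ (X'.filter (fun y => G.Adj z y)).card + 1 := by
              have hsb : X.filter (fun y => G.Adj z y) ⊆ insert x₀ (X'.filter (fun y => G.Adj z y)) := by
                intro v hv
                obtain ⟨hvX, hvz⟩ := Finset.mem_filter.1 hv
                by_cases hvx : v = x₀
                · exact Finset.mem_insert.2 (Or.inl hvx)
                · exact Finset.mem_insert.2 (Or.inr (Finset.mem_filter.2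
                    ⟨Finset.mem_erase.2 ⟨hvx, hvX⟩, hvz⟩))
              calc _ ≤ _ := Finset.card_le_card hsb
                _ ≤ _ := Finset.card_insert_le _ _
            rw [hX'card]
            omega)
      have hax₀ : a ≠ x₀ := by
        rintro rfl
        exact Finset.disjoint_left.1 hdisj hx₀ haW
      have hx₀b : x₀ ≠ b := by
        rintro rfl
        exact Finset.disjoint_left.1 hdisj hx₀ hbW
      refine extend_cover G X W X' W' F' {a, x₀, b} hIs hsub' hpd hcov' hcard'
        ⟨a, x₀, b, hax₀, hab, hx₀b, rfl, hax, hbx⟩ ?_ (Finset.erase_subset _ _)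
        ((Finset.erase_subset _ _).trans (Finset.erase_subset _ _)) ?_ ?_ ?_
      · intro v hv
        simp only [Finset.coe_insert, Set.mem_insert_iff, Finset.coe_singleton,
          Set.mem_singleton_iff] at hv
        rcases hv with rfl | rfl | rfl
        · exact Set.mem_union_right _ (by exact_mod_cast haW)
        · exact Set.mem_union_left _ (by exact_mod_cast hx₀)
        · exact Set.mem_union_right _ (by exact_mod_cast hbW)
      · intro v hv
        simp only [Finset.mem_insert, Finset.mem_singleton] at hv
        rcases hv with rfl | rfl | rfl
        · refine ⟨fun hvX' => Finset.disjoint_left.1 hdisj (Finset.mem_of_mem_erase hvX') haW, ?_⟩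
          simp [hW'def]
        · exact ⟨by simp [hX'def], fun hvW => Finset.disjoint_left.1 hdisj hx₀
            (Finset.mem_of_mem_erase (Finset.mem_of_mem_erase hvW))⟩
        · refine ⟨fun hvX' => Finset.disjoint_left.1 hdisj (Finset.mem_of_mem_erase hvX') hbW, ?_⟩
          simp [hW'def]
      · intro z hz hz'
        have : z = x₀ := by
          by_contra hne
          exact hz' (Finset.mem_erase.2 ⟨hne, hz⟩)
        subst this
        simp
      · have : 1 ≤ k := by
          have := Finset.card_pos.2 ⟨x₀, hx₀⟩
          omega
        omega

end Abstract

end Helpers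

theorem minimum_vertex_cut_has_disjoint_K12_covering {V : Type*} [Fintype V] [DecidableEq V]
    (G : SimpleGraph V) (hconn : G.Connected) (hn : 4 ≤ Fintype.card V)
    (hnc : G ≠ ⊤) (X : Finset V)
    (hcut : ¬ (G.induce (↑X : Set V)ᶜ).Preconnected)
    (hmin : ∀ Y : Finset V, ¬ (G.induce (↑Y : Set V)ᶜ).Preconnected → X.card ≤ Y.card) :
    ∃ F : Finset (Finset V), (∀ s ∈ F, G.IsK12Copy s) ∧
      (F : Set (Finset V)).Pairwise Disjoint ∧
      (∀ x ∈ X, ∃ s ∈ F, x ∈ s) ∧ F.card ≤ X.card := by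
  classical
  obtain ⟨A, B, hS, hdAB, hAne, hBne, hAS, hBS, hnoedge⟩ :=
    not_preconnected_split G ((↑X : Set V)ᶜ) hcut
  set W : Finset V := Finset.univ \ X with hWdef
  have hWmem : ∀ v, v ∈ W ↔ v ∉ X := by intro v; simp [hWdef]
  have hAX : ∀ a ∈ A, a ∉ X := by
    intro a ha
    have := hAS a ha
    simpa using this
  have hBX : ∀ b ∈ B, b ∉ X := by
    intro b hb
    have := hBS b hb
    simpa using this
  -- every x in X has a neighbour in A
  have hA2 : ∀ x ∈ X, ∃ a ∈ A, G.Adj x a := by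
    intro x hx
    by_contra hcon
    push_neg at hcon
    have hpre : ¬ (G.induce (↑(X.erase x) : Set V)ᶜ).Preconnected := by
      apply split_not_preconnected G _ A (B ∪ {x})
      · rw [← Set.union_assoc, ← hS]
        ext v
        simp only [Finset.coe_erase, Set.mem_compl_iff, Set.mem_diff, Set.mem_union,
          Set.mem_singleton_iff, Finset.mem_coe]
        by_cases hvx : v = x
        · subst hvx; simp [hx]
        · simp [hvx]
      · rw [Set.disjoint_union_right]
        refine ⟨hdAB, ?_⟩
        rw [Set.disjoint_right]
        rintro v rfl
        exact fun hA => hAX _ hA hx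
      · exact hAne
      · exact hBne.mono Set.subset_union_left
      · rintro a haA b (hbB | rfl)
        · exact hnoedge a haA b hbB
        · intro hadj
          exact hcon a haA hadj.symm
    have := hmin _ hpre
    rw [Finset.card_erase_of_mem hx] at this
    have hpos : 0 < X.card := Finset.card_pos.2 ⟨x, hx⟩
    omega
  -- every x in X has a neighbour in B
  have hB2 : ∀ x ∈ X, ∃ b ∈ B, G.Adj x b := by
    intro x hx
    by_contra hcon
    push_neg at hcon
    have hpre : ¬ (G.induce (↑(X.erase x) : Set V)ᶜ).Preconnected := by
      apply split_not_preconnected G _ (A ∪ {x}) B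
      · rw [Set.union_comm A {x}, Set.union_assoc, ← hS]
        ext v
        simp only [Finset.coe_erase, Set.mem_compl_iff, Set.mem_diff, Set.mem_union,
          Set.mem_singleton_iff, Finset.mem_coe]
        by_cases hvx : v = x
        · subst hvx; simp [hx]
        · simp [hvx]
      · rw [Set.disjoint_union_left]
        refine ⟨hdAB, ?_⟩
        rw [Set.disjoint_left]
        rintro v rfl
        exact fun hB => hBX _ hB hx
      · exact hAne.mono Set.subset_union_left
      · exact hBne
      · rintro a (haA | rfl) b hbB
        · exact hnoedge a haA b hbB
        · exact fun hadj => hcon b hbB hadj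
    have := hmin _ hpre
    rw [Finset.card_erase_of_mem hx] at this
    have hpos : 0 < X.card := Finset.card_pos.2 ⟨x, hx⟩
    omega
  -- |W| ≥ 2
  have hW2 : 2 ≤ W.card := by
    obtain ⟨a, haA⟩ := hAne
    obtain ⟨b, hbB⟩ := hBne
    have haW : a ∈ W := (hWmem a).2 (hAX a haA)
    have hbW : b ∈ W := (hWmem b).2 (hBX b hbB)
    have hab : a ≠ b := hdAB.ne_of_mem haA hbB
    exact Finset.one_lt_card.2 ⟨a, haW, b, hbW, hab⟩
  have hcardW : W.card = Fintype.card V - X.card := by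
    rw [hWdef, Finset.card_sdiff_of_subset (Finset.subset_univ X), Finset.card_univ]
  have hXn2 : X.card ≤ Fintype.card V - 2 := by omega
  -- minimum degree ≥ |X|
  have h3' : ∀ x ∈ X, X.card ≤ (Finset.univ.filter (fun v => G.Adj x v)).card := by
    intro x hx
    set N : Finset V := Finset.univ.filter (fun v => G.Adj x v) with hNdef
    by_cases hfull : ∃ z, z ≠ x ∧ ¬ G.Adj x z
    · obtain ⟨z, hzx, hzadj⟩ := hfull
      have hmemN : ∀ v, (v ∈ ((↑N : Set V)ᶜ)) ↔ ¬ G.Adj x v := by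
        intro v
        simp [hNdef]
      have hpre : ¬ (G.induce (↑N : Set V)ᶜ).Preconnected := by
        apply split_not_preconnected G _ {x} ((↑N : Set V)ᶜ \ {x})
        · ext v
          simp only [Set.mem_union, Set.mem_singleton_iff, Set.mem_diff]
          constructor
          · intro hv
            by_cases hvx : v = x
            · exact Or.inl hvx
            · exact Or.inr ⟨hv, hvx⟩
          · rintro (rfl | ⟨hv, _⟩)
            · exact (hmemN v).2 (G.loopless.irrefl v)
            · exact hv
        · rw [Set.disjoint_left]
          rintro v rfl ⟨-, hv⟩
          exact hv rfl
        · exact Set.singleton_nonempty x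
        · exact ⟨z, ⟨(hmemN z).2 hzadj, hzx⟩⟩
        · rintro a rfl b ⟨hb, hbx⟩ hadj
          exact (hmemN b).1 hb hadj
      exact hmin _ hpre
    · push_neg at hfull
      have hNeq : N = Finset.univ.erase x := by
        ext v
        simp only [hNdef, Finset.mem_filter, Finset.mem_univ, true_and, Finset.mem_erase,
          and_true]
        constructor
        · intro h
          exact (G.ne_of_adj h).symm
        · intro h
          exact hfull v h
      rw [hNeq, Finset.card_erase_of_mem (Finset.mem_univ x), Finset.card_univ]
      omega
  letI : DecidableRel G.Adj := Classical.decRel _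
  have hdisjXW : Disjoint X W := by
    rw [hWdef]
    exact Finset.disjoint_sdiff
  have h2 : ∀ x ∈ X, 2 ≤ (W.filter (fun w => G.Adj x w)).card := by
    intro x hx
    obtain ⟨a, haA, hxa⟩ := hA2 x hx
    obtain ⟨b, hbB, hxb⟩ := hB2 x hx
    exact Finset.one_lt_card.2 ⟨a, Finset.mem_filter.2 ⟨(hWmem a).2 (hAX a haA), hxa⟩,
      b, Finset.mem_filter.2 ⟨(hWmem b).2 (hBX b hbB), hxb⟩, hdAB.ne_of_mem haA hbB⟩
  have h3 : ∀ x ∈ X, X.card ≤ (W.filter (fun w => G.Adj x w)).card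
      + (X.filter (fun y => G.Adj x y)).card := by
    intro x hx
    have hdeg := h3' x hx
    have hsplit : (Finset.univ.filter (fun v => G.Adj x v)).card
        = (X.filter (fun y => G.Adj x y)).card + (W.filter (fun w => G.Adj x w)).card := by
      rw [← Finset.card_union_of_disjoint (Finset.disjoint_filter_filter hdisjXW),
        ← Finset.filter_union]
      congr 1
      rw [hWdef, Finset.union_sdiff_of_subset (Finset.subset_univ X)]
    omega
  obtain ⟨F, hIs, _, hpd, hcov, hcard⟩ := abs_cover G X.card X W rfl hdisjXW h2 h3
  exact ⟨F, hIs, hpd, hcov, hcard⟩
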